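/- (Fold-Unfold-Inverse for Lists) Let g : β → Gen (Option (α × β)), f : α → β → β, and z : β. Suppose that for all b : β: (i) none ∈ ⟦g b⟧ ↔ b = z, and (ii) for all x : α and b' : β, some (x, b') ∈ ⟦g b⟧ ↔ b = f x b'. Then for every list xs : List α and every b : β, xs ∈ ⟦List.unfold g b⟧ ↔ List.fold f z xs = b. -/
import Mathlib


namespace PBT

inductive Gen : Type → Type 1 where
  | pure {α : Type} : α → Gen α
  | pick {α : Type} : Gen α → Gen α → Gen α
  | bind {α β : Type} : Gen α → (α → Gen β) → Gen β
  | indexed {α : Type} : (ℕ → Gen (Option α)) → Gen α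
  | assume {α : Type} : (b : Bool) → (b = true → Gen α) → Gen α

instance : Pure Gen := ⟨Gen.pure⟩
instance : Bind Gen := ⟨Gen.bind⟩

def Gen.support : {α : Type} → Gen α → Set α
  | _, .pure a' => {a | a = a'}
  | _, .pick x y => {a | a ∈ x.support ∨ a ∈ y.support}
  | _, .bind x f => {a | ∃ a', a' ∈ x.support ∧ a ∈ (f a').support}
  | _, .indexed f => {a | (∃ n, some a ∈ (f n).support) ∧
      (∀ a' n, some a' ∈ (f n).support → some a' ∈ (f (n + 1)).support)}
  | _, .assume b k => {a | ∃ h : b = true, a ∈ (k h).support}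

notation (priority := high) "⟦" g "⟧" => Gen.support g

def listFold {α β : Type} (f : α → β → β) (z : β) : List α → β
  | [] => z
  | x :: xs => f x (listFold f z xs)

def listUnfold.go {α β : Type} (g : β → Gen (Option (α × β))) : β → ℕ → Gen (Option (List α))
  | _, 0 => .pure none
  | b, fuel + 1 =>
    g b >>= fun step =>
      match step with
      | none => .pure (some [])
      | some (x, b') =>
        listUnfold.go g b' fuel >>= fun mxs =>
          match mxs with
          | none => .pure none
          | some xs => .pure (some (x :: xs))

def listUnfold {α β : Type} (g : β → Gen (Option (α × β))) (b : β) : Gen (List α) :=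
  .indexed (listUnfold.go g b)


theorem go_mem {α β : Type} (g : β → Gen (Option (α × β)))
    (f : α → β → β) (z : β)
    (h1 : ∀ b : β, none ∈ ⟦g b⟧ ↔ b = z)
    (h2 : ∀ (b : β) (x : α) (b' : β), some (x, b') ∈ ⟦g b⟧ ↔ b = f x b') :
    ∀ (n : ℕ) (xs : List α) (b : β),
      some xs ∈ ⟦listUnfold.go g b n⟧ ↔ (listFold f z xs = b ∧ xs.length < n) := by
  intro n
  induction n with
  | zero =>
    intro xs b
    simp [listUnfold.go, Gen.support]
  | succ n ih =>
    intro xs b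
    constructor
    · rintro ⟨step, hstep, hmem⟩
      match step with
      | none =>
        simp only [Gen.support, Set.mem_setOf_eq] at hmem
        have hb : b = z := (h1 b).1 hstep
        cases hmem
        exact ⟨hb.symm, Nat.succ_pos _⟩
      | some (x, b') =>
        obtain ⟨mxs, hmxs, hres⟩ := hmem
        match mxs with
        | none => simp [Gen.support] at hres
        | some xs' =>
          simp only [Gen.support, Set.mem_setOf_eq] at hres
          cases hres
          have hb : b = f x b' := (h2 b x b').1 hstep
          obtain ⟨hfold, hlen⟩ := (ih xs' b').1 hmxs
          refine ⟨?_, Nat.succ_lt_succ hlen⟩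
          simp [listFold, hfold, hb]
    · rintro ⟨hfold, hlen⟩
      cases xs with
      | nil =>
        refine ⟨none, (h1 b).2 ?_, rfl⟩
        simpa [listFold] using hfold.symm
      | cons x xs =>
        refine ⟨some (x, listFold f z xs), (h2 b x _).2 ?_, some xs,
          (ih xs _).2 ⟨rfl, Nat.lt_of_succ_lt_succ hlen⟩, rfl⟩
        simpa [listFold] using hfold.symm

theorem fold_unfold_inverse {α β : Type} (g : β → Gen (Option (α × β)))
    (f : α → β → β) (z : β)
    (h1 : ∀ b : β, none ∈ ⟦g b⟧ ↔ b = z)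
    (h2 : ∀ (b : β) (x : α) (b' : β), some (x, b') ∈ ⟦g b⟧ ↔ b = f x b') :
    ∀ (xs : List α) (b : β), xs ∈ ⟦listUnfold g b⟧ ↔ listFold f z xs = b := by
  intro xs b
  constructor
  · rintro ⟨⟨n, hn⟩, _⟩
    exact ((go_mem g f z h1 h2 n xs b).1 hn).1
  · intro hfold
    refine ⟨⟨xs.length + 1, (go_mem g f z h1 h2 _ xs b).2 ⟨hfold, Nat.lt_succ_self _⟩⟩, ?_⟩
    intro xs' n h
    obtain ⟨hf, hl⟩ := (go_mem g f z h1 h2 n xs' b).1 h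
    exact (go_mem g f z h1 h2 (n+1) xs' b).2 ⟨hf, Nat.lt_succ_of_lt hl⟩


end PBT
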